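/- Let K ⊆ ℝ^n be a convex body and Γ ⊆ ℝ^n a nonempty compact set. Suppose there is a set 𝒩 ⊆ ℝ^n \ {0} with 0 ∈ convexHull(𝒩) and such that h(K, ν) ≤ h(Γ, ν) for every ν ∈ 𝒩. Then for every x ∈ ℝ^n the translate Γ + x is not contained in the interior of K. -/

import Mathlib

open scoped RealInnerProductSpace Pointwise
open Metric

noncomputable section

/-- Euclidean space ℝ^n. -/
abbrev Euc (n : ℕ) := EuclideanSpace ℝ (Fin n)

/-- The image of a closed polygon with vertices `q 0, …, q (m-1)` (indices mod `m`):
the union of the segments `[q i, q (i+1)]`. -/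
def polyImage {n m : ℕ} [NeZero m] (q : Fin m → Euc n) : Set (Euc n) :=
  ⋃ i : Fin m, segment ℝ (q i) (q (i + 1))

/-- The length of a closed polygon: `∑ i, ‖q (i+1) - q i‖`. -/
noncomputable def polyLength {n m : ℕ} [NeZero m] (q : Fin m → Euc n) : ℝ :=
  ∑ i : Fin m, ‖q (i + 1) - q i‖

/-- A convex body: a compact convex set with nonempty interior. -/
def IsConvexBody {n : ℕ} (K : Set (Euc n)) : Prop :=
  IsCompact K ∧ Convex ℝ K ∧ (interior K).Nonempty

/-- A closed polygon belongs to `𝒫⁺(K)` if no translate of its image is contained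
in the interior of `K`. -/
def InPPlus {n m : ℕ} [NeZero m] (K : Set (Euc n)) (q : Fin m → Euc n) : Prop :=
  ∀ x : Euc n, ¬ ((fun p => p + x) '' polyImage q ⊆ interior K)

/-- Unit direction of the `i`-th edge of a closed polygon. -/
noncomputable def dir {n m : ℕ} [NeZero m] (q : Fin m → Euc n) (i : Fin m) : Euc n :=
  ‖q (i + 1) - q i‖⁻¹ • (q (i + 1) - q i)

/-- Outer normal `ν i = u (i-1) - u i` at the `i`-th vertex. -/
noncomputable def normalVec {n m : ℕ} [NeZero m] (q : Fin m → Euc n) (i : Fin m) : Euc n :=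
  dir q (i - 1) - dir q i

/-- A periodic billiard trajectory on a convex body `K`. -/
def IsBilliard {n m : ℕ} [NeZero m] (K : Set (Euc n)) (q : Fin m → Euc n) : Prop :=
  2 ≤ m ∧ (∀ i, q (i + 1) ≠ q i) ∧ (∀ i, q i ∈ K) ∧
    ∀ i, normalVec q i ≠ 0 ∧ ∀ x ∈ K, ⟪x - q i, normalVec q i⟫ ≤ 0

/-- Support function of a set. -/
noncomputable def suppFn {n : ℕ} (S : Set (Euc n)) (ν : Euc n) : ℝ :=
  sSup ((fun s => ⟪s, ν⟫) '' S)

theorem stmt0 {n : ℕ} (K Γ : Set (Euc n)) (hK : IsConvexBody K)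
    (hΓne : Γ.Nonempty) (hΓc : IsCompact Γ)
    (N : Set (Euc n)) (hN : ∀ ν ∈ N, ν ≠ (0 : Euc n))
    (h0 : (0 : Euc n) ∈ convexHull ℝ N)
    (hsupp : ∀ ν ∈ N, suppFn K ν ≤ suppFn Γ ν) :
    ∀ x : Euc n, ¬ ((fun p => p + x) '' Γ ⊆ interior K) := by
  intro x hsub
  -- key claim: ⟪x, ν⟫ < 0 for every ν ∈ N
  have key : ∀ ν ∈ N, ⟪x, ν⟫ < 0 := by
    intro ν hν
    have hν0 := hN ν hν
    have hcont : Continuous fun s : Euc n => ⟪s, ν⟫ :=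
      continuous_id.inner continuous_const
    obtain ⟨p, hpΓ, hpmax⟩ := hΓc.exists_isMaxOn hΓne hcont.continuousOn
    have hΓsup : suppFn Γ ν = ⟪p, ν⟫ := by
      apply IsGreatest.csSup_eq
      exact ⟨Set.mem_image_of_mem _ hpΓ, by
        rintro _ ⟨y, hy, rfl⟩; exact hpmax hy⟩
    -- p + x ∈ interior K, so we can push a bit in direction ν
    have hmem : p + x ∈ interior K := hsub ⟨p, hpΓ, rfl⟩
    obtain ⟨ε, hε, hball⟩ := Metric.isOpen_iff.mp isOpen_interior _ hmem
    set δ : ℝ := ε / (2 * ‖ν‖) with hδdef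
    have hνnorm : (0 : ℝ) < ‖ν‖ := norm_pos_iff.mpr hν0
    have hδ : 0 < δ := by positivity
    have hz : p + x + δ • ν ∈ K := by
      apply interior_subset
      apply hball
      simp only [Metric.mem_ball, dist_eq_norm]
      have : p + x + δ • ν - (p + x) = δ • ν := by abel
      rw [this, norm_smul, Real.norm_of_nonneg hδ.le, hδdef]
      have heq : ‖ν‖ * (ε / (2 * ‖ν‖)) = ε / 2 := by
        field_simp
      rw [mul_comm, heq]
      linarith
    have hKbdd : BddAbove ((fun s : Euc n => ⟪s, ν⟫) '' K) :=
      (hK.1.image hcont).bddAbove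
    have hzle : ⟪p + x + δ • ν, ν⟫ ≤ suppFn K ν :=
      le_csSup hKbdd (Set.mem_image_of_mem _ hz)
    have hKΓ : suppFn K ν ≤ ⟪p, ν⟫ := hΓsup ▸ hsupp ν hν
    have hexp : ⟪p + x + δ • ν, ν⟫ = ⟪p, ν⟫ + ⟪x, ν⟫ + δ * ‖ν‖ ^ 2 := by
      rw [inner_add_left, inner_add_left, real_inner_smul_left,
        real_inner_self_eq_norm_sq]
    nlinarith [hzle.trans hKΓ, sq_nonneg ‖ν‖, mul_pos hδ (mul_pos hνnorm hνnorm)]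
  -- convexity argument: {ν | ⟪x, ν⟫ < 0} is convex and contains N, hence 0
  have hlin : IsLinearMap ℝ (fun ν : Euc n => ⟪x, ν⟫) :=
    ⟨fun a b => inner_add_right x a b, fun c a => real_inner_smul_right x a c⟩
  have hconv : Convex ℝ {ν : Euc n | ⟪x, ν⟫ < 0} := convex_halfSpace_lt hlin 0
  have : (0 : Euc n) ∈ {ν : Euc n | ⟪x, ν⟫ < 0} :=
    convexHull_min key hconv h0
  simp [inner_zero_right] at this
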